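/- Let (Ω, 𝓕, P) be a probability space with filtration (𝓕_n)_{n≥0}. Let (c_n)_{n≥1} ⊆ [0,1] be a deterministic sequence and c* ∈ [0,1] with liminf_{n→∞} c_n ≥ c*. Let (H_n)_{n≥1} be {0,1}-valued random variables with H_n 𝓕_n-measurable and E[H_n | 𝓕_{n−1}] = c_n almost surely for every n. Let σ be a random variable with values in {1,2,…} satisfying E[σ] < ∞, and let (R_n)_{n≥1} be {0,1}-valued random variables such that R_n(ω) = H_n(ω) whenever n ≥ σ(ω). Then for every ε > 0: ∑_{n=1}^{∞} P( ∑_{m=1}^{n} R_m < n·(c* − ε) ) < ∞. -/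

import Mathlib

open MeasureTheory

private lemma bdd_integrable {Ω : Type*} {m0 : MeasurableSpace Ω} {P : Measure Ω}
    [IsProbabilityMeasure P] {f : Ω → ℝ} (hf : Measurable f) {B : ℝ}
    (hB : ∀ ω, |f ω| ≤ B) : Integrable f P :=
  ⟨hf.aestronglyMeasurable, HasFiniteIntegral.of_bounded (C := B)
    (Filter.Eventually.of_forall (by simpa [Real.norm_eq_abs] using hB))⟩

private lemma step_mul {Ω : Type*} {m0 : MeasurableSpace Ω} (P : Measure Ω)
    [IsProbabilityMeasure P] {m : MeasurableSpace Ω} (hm : m ≤ m0) {Hn X : Ω → ℝ}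
    (hHn : Measurable[m0] Hn) (hH01 : ∀ ω, Hn ω = 0 ∨ Hn ω = 1)
    {cn : ℝ} (hcond : P[Hn | m] =ᵐ[P] fun _ => cn)
    (hX : StronglyMeasurable[m] X) {B : ℝ} (hXB : ∀ ω, |X ω| ≤ B) :
    ∫ ω, X ω * Hn ω ∂P = cn * ∫ ω, X ω ∂P := by
  have hH1 : ∀ ω, |Hn ω| ≤ 1 := by
    intro ω; rcases hH01 ω with h | h <;> rw [h] <;> norm_num
  have hXm0 : Measurable[m0] X := (hX.mono hm).measurable
  have hXint : Integrable X P := bdd_integrable hXm0 hXB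
  have hHint : Integrable Hn P := bdd_integrable hHn hH1
  have hXHb : ∀ ω, |X ω * Hn ω| ≤ B := by
    intro ω
    rw [abs_mul]
    calc |X ω| * |Hn ω| ≤ B * 1 :=
          mul_le_mul (hXB ω) (hH1 ω) (abs_nonneg _) (le_trans (abs_nonneg _) (hXB ω))
    _ = B := mul_one B
  have hXHint : Integrable (fun ω => X ω * Hn ω) P := bdd_integrable (hXm0.mul hHn) hXHb
  have hpull := condExp_mul_of_stronglyMeasurable_left hX hXHint hHint
  calc ∫ ω, X ω * Hn ω ∂P
      = ∫ ω, (P[(fun ω => X ω * Hn ω) | m]) ω ∂P := (integral_condExp hm).symm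
    _ = ∫ ω, X ω * (P[Hn | m]) ω ∂P := integral_congr_ae hpull
    _ = ∫ ω, X ω * cn ∂P := by
        refine integral_congr_ae ?_
        filter_upwards [hcond] with ω h
        rw [h]
    _ = cn * ∫ ω, X ω ∂P := by rw [integral_mul_const]; ring

private lemma step_pow {Ω : Type*} {m0 : MeasurableSpace Ω} (P : Measure Ω)
    [IsProbabilityMeasure P] {m : MeasurableSpace Ω} (hm : m ≤ m0) {Hn X : Ω → ℝ}
    (hHn : Measurable[m0] Hn) (hH01 : ∀ ω, Hn ω = 0 ∨ Hn ω = 1)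
    {cn : ℝ} (hcond : P[Hn | m] =ᵐ[P] fun _ => cn)
    (hX : StronglyMeasurable[m] X) {B : ℝ} (hXB : ∀ ω, |X ω| ≤ B)
    (j : ℕ) (a b : ℝ) (hab : ∀ x : ℝ, x = 0 ∨ x = 1 → (x - cn) ^ j = a * x + b) :
    ∫ ω, X ω * (Hn ω - cn) ^ j ∂P = (a * cn + b) * ∫ ω, X ω ∂P := by
  have hH1 : ∀ ω, |Hn ω| ≤ 1 := by
    intro ω; rcases hH01 ω with h | h <;> rw [h] <;> norm_num
  have hXm0 : Measurable[m0] X := (hX.mono hm).measurable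
  have hXint : Integrable X P := bdd_integrable hXm0 hXB
  have hXHb : ∀ ω, |X ω * Hn ω| ≤ B := by
    intro ω
    rw [abs_mul]
    calc |X ω| * |Hn ω| ≤ B * 1 :=
          mul_le_mul (hXB ω) (hH1 ω) (abs_nonneg _) (le_trans (abs_nonneg _) (hXB ω))
    _ = B := mul_one B
  have hXHint : Integrable (fun ω => X ω * Hn ω) P := bdd_integrable (hXm0.mul hHn) hXHb
  have hptw : ∀ ω, X ω * (Hn ω - cn) ^ j = a * (X ω * Hn ω) + b * X ω := by
    intro ω; rw [hab _ (hH01 ω)]; ring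
  calc ∫ ω, X ω * (Hn ω - cn) ^ j ∂P
      = ∫ ω, (a * (X ω * Hn ω) + b * X ω) ∂P := by
        exact integral_congr_ae (Filter.Eventually.of_forall hptw)
    _ = a * ∫ ω, X ω * Hn ω ∂P + b * ∫ ω, X ω ∂P := by
        rw [integral_add (hXHint.const_mul a) (hXint.const_mul b),
          integral_const_mul, integral_const_mul]
    _ = (a * cn + b) * ∫ ω, X ω ∂P := by
        rw [step_mul P hm hHn hH01 hcond hX hXB]; ring

private lemma markov4 {Ω : Type*} {m0 : MeasurableSpace Ω} (P : Measure Ω)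
    [IsProbabilityMeasure P] {f : Ω → ℝ} (hfi : Integrable (fun ω => f ω ^ 4) P)
    {a M : ℝ} (ha : 0 < a) (hM : ∫ ω, f ω ^ 4 ∂P ≤ M) :
    P {ω | f ω < -a} ≤ ENNReal.ofReal (M / a ^ 4) := by
  have hsub : {ω | f ω < -a} ⊆ {ω | a ^ 4 ≤ f ω ^ 4} := by
    intro ω h
    simp only [Set.mem_setOf_eq] at h ⊢
    have h1 : a ≤ -f ω := by linarith
    have h2 := pow_le_pow_left₀ ha.le h1 4
    have h3 : (-f ω) ^ 4 = f ω ^ 4 := by ring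
    linarith
  have hmar := mul_meas_ge_le_integral_of_nonneg
    (μ := P) (f := fun ω => f ω ^ 4)
    (Filter.Eventually.of_forall fun ω => by positivity) hfi (a ^ 4)
  have ha4 : (0:ℝ) < a ^ 4 := by positivity
  have htr : (P {ω | a ^ 4 ≤ f ω ^ 4}).toReal ≤ M / a ^ 4 := by
    rw [le_div_iff₀ ha4]
    calc (P {ω | a ^ 4 ≤ f ω ^ 4}).toReal * a ^ 4
        = a ^ 4 * (P {ω | a ^ 4 ≤ f ω ^ 4}).toReal := by ring
      _ ≤ ∫ ω, f ω ^ 4 ∂P := hmar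
      _ ≤ M := hM
  calc P {ω | f ω < -a} ≤ P {ω | a ^ 4 ≤ f ω ^ 4} := measure_mono hsub
    _ = ENNReal.ofReal ((P {ω | a ^ 4 ≤ f ω ^ 4}).toReal) := (ENNReal.ofReal_toReal (measure_ne_top P _)).symm
    _ ≤ ENNReal.ofReal (M / a ^ 4) := ENNReal.ofReal_le_ofReal htr

private lemma tail_sum {Ω : Type*} {m0 : MeasurableSpace Ω} (P : Measure Ω)
    [IsProbabilityMeasure P] (Z : Ω → ℕ) (hZ : Measurable Z) :
    ∑' n : ℕ, P {ω | n < Z ω} = ∫⁻ ω, (Z ω : ENNReal) ∂P := by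
  have hms : ∀ n : ℕ, MeasurableSet {ω | n < Z ω} := fun n =>
    hZ (measurableSet_Ioi (a := n))
  have h1 : ∀ n : ℕ, P {ω | n < Z ω}
      = ∫⁻ ω, Set.indicator {ω | n < Z ω} (fun _ => (1:ENNReal)) ω ∂P := by
    intro n
    exact (lintegral_indicator_one (hms n)).symm
  calc ∑' n : ℕ, P {ω | n < Z ω}
      = ∑' n : ℕ, ∫⁻ ω, Set.indicator {ω | n < Z ω} (fun _ => (1:ENNReal)) ω ∂P :=
        tsum_congr h1
    _ = ∫⁻ ω, ∑' n : ℕ, Set.indicator {ω | n < Z ω} (fun _ => (1:ENNReal)) ω ∂P :=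
        (lintegral_tsum fun n => (measurable_one.indicator (hms n)).aemeasurable).symm
    _ = ∫⁻ ω, (Z ω : ENNReal) ∂P := by
        refine lintegral_congr fun ω => ?_
        have : ∀ n : ℕ, Set.indicator {ω | n < Z ω} (fun _ => (1:ENNReal)) ω
            = if n < Z ω then 1 else 0 := fun n => by
          by_cases h : n < Z ω <;> simp [Set.indicator_apply, h]
        simp only [this]
        rw [tsum_eq_sum (s := Finset.range (Z ω)) (fun n hn => by
          simp [Finset.mem_range, not_lt] at hn; simp [not_lt.2 hn]),
          Finset.sum_congr rfl (fun n hn => if_pos (Finset.mem_range.mp hn))]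
        simp

private lemma moments {Ω : Type*} {m0 : MeasurableSpace Ω} (P : Measure Ω) [IsProbabilityMeasure P]
    (ℱ : Filtration ℕ m0) (c : ℕ → ℝ) (hc01 : ∀ n, 0 ≤ c n ∧ c n ≤ 1)
    (H : ℕ → Ω → ℝ) (hH01 : ∀ n ω, H n ω = 0 ∨ H n ω = 1)
    (hHmeas : ∀ n, 1 ≤ n → Measurable[ℱ n] (H n))
    (hHcond : ∀ n : ℕ, 1 ≤ n → P[H n | ℱ (n - 1)] =ᵐ[P] fun _ => c n) :
    ∀ n : ℕ, (∫ ω, (∑ m ∈ Finset.Icc 1 n, (H m ω - c m)) ∂P = 0) ∧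
      (∫ ω, (∑ m ∈ Finset.Icc 1 n, (H m ω - c m)) ^ 2 ∂P ≤ n) ∧
      (∫ ω, (∑ m ∈ Finset.Icc 1 n, (H m ω - c m)) ^ 4 ∂P ≤ 3 * n ^ 2) := by
  intro n
  induction n with
  | zero => norm_num
  | succ n ih =>
    set S : Ω → ℝ := fun ω => ∑ m ∈ Finset.Icc 1 n, (H m ω - c m) with hSdef
    set d : Ω → ℝ := fun ω => H (n + 1) ω - c (n + 1) with hddef
    obtain ⟨ih1, ih2, ih4⟩ := ih
    -- basic facts
    have hcn := hc01 (n + 1)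
    have hcond' : P[H (n + 1) | ℱ n] =ᵐ[P] fun _ => c (n + 1) := by
      simpa using hHcond (n + 1) (by omega)
    have hHn0 : Measurable[m0] (H (n + 1)) :=
      (hHmeas (n + 1) (by omega)).mono (ℱ.le (n + 1)) le_rfl
    have hSm : Measurable[ℱ n] S := by
      apply Finset.measurable_sum
      intro m hm
      rw [Finset.mem_Icc] at hm
      exact ((hHmeas m hm.1).mono (ℱ.mono hm.2) le_rfl).sub measurable_const
    have hS0 : Measurable[m0] S := hSm.mono (ℱ.le n) le_rfl
    have hd0 : Measurable[m0] d := hHn0.sub measurable_const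
    have habs1 : ∀ m ω, |H m ω - c m| ≤ 1 := by
      intro m ω
      rcases hH01 m ω with h | h <;> rw [h] <;> rw [abs_le] <;>
        constructor <;> linarith [(hc01 m).1, (hc01 m).2]
    have hSb : ∀ ω, |S ω| ≤ (n : ℝ) := by
      intro ω
      calc |S ω| ≤ ∑ m ∈ Finset.Icc 1 n, |H m ω - c m| := Finset.abs_sum_le_sum_abs _ _
        _ ≤ ∑ m ∈ Finset.Icc 1 n, (1 : ℝ) := Finset.sum_le_sum fun m _ => habs1 m ω
        _ = (n : ℝ) := by simp [Nat.card_Icc]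
    have hSkb : ∀ (k : ℕ) ω, |S ω ^ k| ≤ (n : ℝ) ^ k := by
      intro k ω
      rw [abs_pow]
      exact pow_le_pow_left₀ (abs_nonneg _) (hSb ω) k
    have hdb : ∀ ω, |d ω| ≤ 1 := fun ω => habs1 (n + 1) ω
    have hSksm : ∀ k : ℕ, StronglyMeasurable[ℱ n] (fun ω => S ω ^ k) := fun k =>
      (hSm.pow_const k).stronglyMeasurable
    have hint : ∀ k j : ℕ, Integrable (fun ω => S ω ^ k * d ω ^ j) P := by
      intro k j
      refine bdd_integrable ((hS0.pow_const k).mul (hd0.pow_const j)) (B := (n : ℝ) ^ k) ?_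
      intro ω
      rw [abs_mul]
      calc |S ω ^ k| * |d ω ^ j| ≤ (n : ℝ) ^ k * 1 := by
            refine mul_le_mul (hSkb k ω) ?_ (abs_nonneg _) (by positivity)
            rw [abs_pow]
            exact pow_le_one₀ (abs_nonneg _) (hdb ω)
        _ = (n : ℝ) ^ k := mul_one _
    -- key identity
    have key : ∀ (k j : ℕ) (a b : ℝ),
        (∀ x : ℝ, x = 0 ∨ x = 1 → (x - c (n + 1)) ^ j = a * x + b) →
        ∫ ω, S ω ^ k * d ω ^ j ∂P = (a * c (n + 1) + b) * ∫ ω, S ω ^ k ∂P := by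
      intro k j a b hab
      exact step_pow P (ℱ.le n) hHn0 (hH01 (n + 1)) hcond' (hSksm k) (hSkb k) j a b hab
    have hIk0 : ∀ k : ℕ, ∫ ω, S ω ^ k * d ω ^ 0 ∂P = ∫ ω, S ω ^ k ∂P := by
      intro k; simp
    have hS1 : ∫ ω, S ω ^ 1 ∂P = 0 := by simpa using ih1
    -- the mixed-moment values
    have hIk1 : ∀ k : ℕ, ∫ ω, S ω ^ k * d ω ^ 1 ∂P = 0 := by
      intro k
      rw [key k 1 1 (-(c (n + 1))) (fun x hx => by rcases hx with h | h <;> subst h <;> ring)]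
      ring
    have hI22 : ∫ ω, S ω ^ 2 * d ω ^ 2 ∂P
        = ((1 - 2 * c (n + 1)) * c (n + 1) + c (n + 1) ^ 2) * ∫ ω, S ω ^ 2 ∂P :=
      key 2 2 (1 - 2 * c (n + 1)) (c (n + 1) ^ 2)
        (fun x hx => by rcases hx with h | h <;> subst h <;> ring)
    have hI13 : ∫ ω, S ω ^ 1 * d ω ^ 3 ∂P = 0 := by
      rw [key 1 3 ((1 - c (n + 1)) ^ 3 + c (n + 1) ^ 3) (-(c (n + 1) ^ 3))
        (fun x hx => by rcases hx with h | h <;> subst h <;> ring), hS1, mul_zero]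
    have hI04 : ∫ ω, S ω ^ 0 * d ω ^ 4 ∂P
        = ((1 - c (n + 1)) ^ 4 - c (n + 1) ^ 4) * c (n + 1) + c (n + 1) ^ 4 := by
      rw [key 0 4 ((1 - c (n + 1)) ^ 4 - c (n + 1) ^ 4) (c (n + 1) ^ 4)
        (fun x hx => by rcases hx with h | h <;> subst h <;> ring)]
      simp
    -- coefficient bounds
    set κ2 : ℝ := (1 - 2 * c (n + 1)) * c (n + 1) + c (n + 1) ^ 2 with hκ2def
    set κ4 : ℝ := ((1 - c (n + 1)) ^ 4 - c (n + 1) ^ 4) * c (n + 1) + c (n + 1) ^ 4 with hκ4def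
    have hκ2a : 0 ≤ κ2 := by nlinarith [hcn.1, hcn.2]
    have hκ2b : κ2 ≤ 1 := by nlinarith [hcn.1, hcn.2]
    have h1c : (0:ℝ) ≤ 1 - c (n + 1) := by linarith [hcn.2]
    have h1c1 : (1:ℝ) - c (n + 1) ≤ 1 := by linarith [hcn.1]
    have hp4 : (0:ℝ) ≤ (1 - c (n + 1)) ^ 4 := pow_nonneg h1c 4
    have hc4 : (0:ℝ) ≤ c (n + 1) ^ 4 := pow_nonneg hcn.1 4
    have hp41 : (1 - c (n + 1)) ^ 4 ≤ 1 := pow_le_one₀ h1c h1c1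
    have hc41 : c (n + 1) ^ 4 ≤ 1 := pow_le_one₀ hcn.1 hcn.2
    have hκ4a : 0 ≤ κ4 := by
      nlinarith [mul_nonneg hcn.1 hp4, mul_nonneg hc4 h1c]
    have hκ4b : κ4 ≤ 1 := by
      nlinarith [mul_le_of_le_one_right hcn.1 hp41, mul_le_of_le_one_left h1c hc41]
    have he2nn : 0 ≤ ∫ ω, S ω ^ 2 ∂P := integral_nonneg fun ω => sq_nonneg _
    -- rewrite the sums over Icc 1 (n+1)
    have hsucc : ∀ ω, (∑ m ∈ Finset.Icc 1 (n + 1), (H m ω - c m)) = S ω + d ω := by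
      intro ω
      rw [hSdef, hddef]
      exact Finset.sum_Icc_succ_top (by omega) _
    refine ⟨?_, ?_, ?_⟩
    · -- first moment
      have : ∫ ω, (∑ m ∈ Finset.Icc 1 (n + 1), (H m ω - c m)) ∂P
          = ∫ ω, (S ω ^ 1 * d ω ^ 0 + S ω ^ 0 * d ω ^ 1) ∂P :=
        integral_congr_ae (Filter.Eventually.of_forall fun ω => by simp only [hsucc]; ring)
      rw [this, integral_add (hint 1 0) (hint 0 1), hIk1 0, hIk0 1, hS1]
      ring
    · -- second moment
      have : ∫ ω, (∑ m ∈ Finset.Icc 1 (n + 1), (H m ω - c m)) ^ 2 ∂P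
          = ∫ ω, (S ω ^ 2 * d ω ^ 0 + (2 * (S ω ^ 1 * d ω ^ 1) + S ω ^ 0 * d ω ^ 2)) ∂P :=
        integral_congr_ae (Filter.Eventually.of_forall fun ω => by simp only [hsucc]; ring)
      rw [this, integral_add (hint 2 0)
          (show Integrable (fun ω => 2 * (S ω ^ 1 * d ω ^ 1) + S ω ^ 0 * d ω ^ 2) P from
            ((hint 1 1).const_mul 2).add (hint 0 2)),
        integral_add ((hint 1 1).const_mul 2) (hint 0 2), integral_const_mul, hIk1 1, hIk0 2,
        key 0 2 (1 - 2 * c (n + 1)) (c (n + 1) ^ 2)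
          (fun x hx => by rcases hx with h | h <;> subst h <;> ring)]
      simp only [pow_zero, integral_const, measure_univ, ENNReal.toReal_one, smul_eq_mul, probReal_univ]
      push_cast
      nlinarith [ih2]
    · -- fourth moment
      have : ∫ ω, (∑ m ∈ Finset.Icc 1 (n + 1), (H m ω - c m)) ^ 4 ∂P
          = ∫ ω, (S ω ^ 4 * d ω ^ 0 + (4 * (S ω ^ 3 * d ω ^ 1) + (6 * (S ω ^ 2 * d ω ^ 2)
              + (4 * (S ω ^ 1 * d ω ^ 3) + S ω ^ 0 * d ω ^ 4)))) ∂P :=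
        integral_congr_ae (Filter.Eventually.of_forall fun ω => by simp only [hsucc]; ring)
      rw [this, integral_add (hint 4 0)
          (show Integrable (fun ω => 4 * (S ω ^ 3 * d ω ^ 1) + (6 * (S ω ^ 2 * d ω ^ 2)
              + (4 * (S ω ^ 1 * d ω ^ 3) + S ω ^ 0 * d ω ^ 4))) P from ((hint 3 1).const_mul 4).add
            (((hint 2 2).const_mul 6).add (((hint 1 3).const_mul 4).add (hint 0 4)))),
        integral_add ((hint 3 1).const_mul 4)
          (show Integrable (fun ω => 6 * (S ω ^ 2 * d ω ^ 2)
              + (4 * (S ω ^ 1 * d ω ^ 3) + S ω ^ 0 * d ω ^ 4)) P from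
            ((hint 2 2).const_mul 6).add (((hint 1 3).const_mul 4).add (hint 0 4))),
        integral_add ((hint 2 2).const_mul 6)
          (show Integrable (fun ω => 4 * (S ω ^ 1 * d ω ^ 3) + S ω ^ 0 * d ω ^ 4) P from
            ((hint 1 3).const_mul 4).add (hint 0 4)),
        integral_add ((hint 1 3).const_mul 4) (hint 0 4),
        integral_const_mul, integral_const_mul, integral_const_mul,
        hIk1 3, hIk0 4, hI22, hI13, hI04]
      push_cast
      nlinarith [ih4, ih2, he2nn, mul_nonneg hκ2a (sub_nonneg.2 ih2),
        mul_nonneg (sub_nonneg.2 hκ2b) he2nn]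


/-- abstract form of Theorem 6.2(i): let `(c_n) ⊆ [0,1]` with
`liminf c_n ≥ c* ∈ [0,1]`; let `H_n ∈ {0,1}` be `𝓕_n`-measurable with
`E[H_n | 𝓕_{n−1}] = c_n` a.s.; let `σ ≥ 1` be an integrable random time and suppose
`R_n(ω) = H_n(ω)` for all `n ≥ σ(ω)` with `R_n ∈ {0,1}`. Then for every `ε > 0`,
`∑_n P(∑_{m=1}^n R_m < n (c* − ε)) < ∞`. -/
theorem stmt_18 {Ω : Type*} {m0 : MeasurableSpace Ω} (P : Measure Ω) [IsProbabilityMeasure P]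
    (ℱ : Filtration ℕ m0)
    (c : ℕ → ℝ) (hc01 : ∀ n, 0 ≤ c n ∧ c n ≤ 1)
    (cstar : ℝ) (hcstar0 : 0 ≤ cstar) (hcstar1 : cstar ≤ 1)
    (hliminf : cstar ≤ Filter.liminf c Filter.atTop)
    (H : ℕ → Ω → ℝ) (hH01 : ∀ n ω, H n ω = 0 ∨ H n ω = 1)
    (hHmeas : ∀ n, 1 ≤ n → Measurable[ℱ n] (H n))
    (hHcond : ∀ n : ℕ, 1 ≤ n → P[H n | ℱ (n - 1)] =ᵐ[P] fun _ => c n)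
    (σ : Ω → ℕ) (hσ1 : ∀ ω, 1 ≤ σ ω) (hσmeas : Measurable σ)
    (hσint : Integrable (fun ω => (σ ω : ℝ)) P)
    (R : ℕ → Ω → ℝ) (hR01 : ∀ n ω, R n ω = 0 ∨ R n ω = 1)
    (hRH : ∀ n ω, σ ω ≤ n → R n ω = H n ω) :
    ∀ ε : ℝ, 0 < ε →
      ∑' n : ℕ, P {ω | (∑ m ∈ Finset.Icc 1 n, R m ω) < (n : ℝ) * (cstar - ε)} < ⊤ := by
  intro ε hε
  by_cases hce : cstar - ε ≤ 0
  · have hempty : ∀ n : ℕ,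
        {ω | (∑ m ∈ Finset.Icc 1 n, R m ω) < (n : ℝ) * (cstar - ε)} = ∅ := by
      intro n
      ext ω
      simp only [Set.mem_setOf_eq, Set.mem_empty_iff_false, iff_false, not_lt]
      have h1 : (n : ℝ) * (cstar - ε) ≤ 0 :=
        mul_nonpos_of_nonneg_of_nonpos (Nat.cast_nonneg n) hce
      have h2 : (0:ℝ) ≤ ∑ m ∈ Finset.Icc 1 n, R m ω :=
        Finset.sum_nonneg fun m _ => by rcases hR01 m ω with h | h <;> rw [h] <;> norm_num
      linarith
    simp [hempty]
  push_neg at hce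
  -- choose N from the liminf hypothesis
  have hbdd : Filter.IsBoundedUnder (· ≥ ·) Filter.atTop c :=
    Filter.isBoundedUnder_of ⟨0, fun n => (hc01 n).1⟩
  have hev : ∀ᶠ m in Filter.atTop, cstar - ε / 2 < c m :=
    Filter.eventually_lt_of_lt_liminf (lt_of_lt_of_le (by linarith) hliminf) hbdd
  obtain ⟨N, hN⟩ := Filter.eventually_atTop.1 hev
  -- notation
  set S : ℕ → Ω → ℝ := fun n ω => ∑ m ∈ Finset.Icc 1 n, (H m ω - c m) with hSdef
  have hmom := moments P ℱ c hc01 H hH01 hHmeas hHcond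
  have hSmeas : ∀ n : ℕ, Measurable[m0] (S n) := by
    intro n
    apply Finset.measurable_sum
    intro m hm
    exact ((hHmeas m (Finset.mem_Icc.1 hm).1).mono (ℱ.le m) le_rfl).sub measurable_const
  have habs1 : ∀ m ω, |H m ω - c m| ≤ 1 := by
    intro m ω
    rcases hH01 m ω with h | h <;> rw [h] <;> rw [abs_le] <;>
      constructor <;> linarith [(hc01 m).1, (hc01 m).2]
  have hSb : ∀ n ω, |S n ω| ≤ (n : ℝ) := by
    intro n ω
    calc |S n ω| ≤ ∑ m ∈ Finset.Icc 1 n, |H m ω - c m| := Finset.abs_sum_le_sum_abs _ _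
      _ ≤ ∑ m ∈ Finset.Icc 1 n, (1 : ℝ) := Finset.sum_le_sum fun m _ => habs1 m ω
      _ = (n : ℝ) := by simp [Nat.card_Icc]
  have hS4int : ∀ n : ℕ, Integrable (fun ω => S n ω ^ 4) P := by
    intro n
    refine bdd_integrable ((hSmeas n).pow_const 4) (B := (n : ℝ) ^ 4) ?_
    intro ω
    rw [abs_pow]
    exact pow_le_pow_left₀ (abs_nonneg _) (hSb n ω) 4
  -- the two covering sets
  set A : ℕ → Set Ω := fun n => {ω | S n ω < -((n : ℝ) * ε / 4)} with hAdef
  set B : ℕ → Set Ω := fun n => {ω | (n : ℝ) * ε / 4 < (σ ω : ℝ) + N} with hBdef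
  have hsub : ∀ n : ℕ,
      {ω | (∑ m ∈ Finset.Icc 1 n, R m ω) < (n : ℝ) * (cstar - ε)} ⊆ A n ∪ B n := by
    intro n ω hω
    simp only [Set.mem_setOf_eq] at hω
    by_contra hcon
    simp only [Set.mem_union, hAdef, hBdef, Set.mem_setOf_eq, not_or, not_lt] at hcon
    obtain ⟨h1, h2⟩ := hcon
    -- ∑ (H - R) ≤ σ
    have hHRsum : (∑ m ∈ Finset.Icc 1 n, (H m ω - R m ω)) ≤ (σ ω : ℝ) := by
      calc ∑ m ∈ Finset.Icc 1 n, (H m ω - R m ω)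
          ≤ ∑ m ∈ Finset.Icc 1 n, (if m < σ ω then (1 : ℝ) else 0) := by
            apply Finset.sum_le_sum
            intro m _
            by_cases hmσ : m < σ ω
            · rw [if_pos hmσ]
              rcases hH01 m ω with h | h <;> rcases hR01 m ω with h' | h' <;>
                rw [h, h'] <;> norm_num
            · push_neg at hmσ
              rw [if_neg (not_lt.2 hmσ), hRH m ω hmσ]
              simp
        _ = (((Finset.Icc 1 n).filter (fun m => m < σ ω)).card : ℝ) := by
            rw [Finset.sum_boole]
        _ ≤ (σ ω : ℝ) := by
            have hsubf : (Finset.Icc 1 n).filter (fun m => m < σ ω) ⊆ Finset.Ico 1 (σ ω) := by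
              intro m hm
              simp only [Finset.mem_filter, Finset.mem_Icc, Finset.mem_Ico] at hm ⊢
              omega
            have hcard := Finset.card_le_card hsubf
            rw [Nat.card_Ico] at hcard
            exact_mod_cast le_trans hcard (Nat.sub_le _ _)
    have hsplitH : (∑ m ∈ Finset.Icc 1 n, (H m ω - R m ω))
        = (∑ m ∈ Finset.Icc 1 n, H m ω) - ∑ m ∈ Finset.Icc 1 n, R m ω :=
      Finset.sum_sub_distrib _ _
    have hsplitS : S n ω
        = (∑ m ∈ Finset.Icc 1 n, H m ω) - ∑ m ∈ Finset.Icc 1 n, c m := by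
      rw [hSdef]
      exact Finset.sum_sub_distrib _ _
    -- lower bound on ∑ c
    have hsumc : ((n : ℝ) - N) * (cstar - ε / 2) ≤ ∑ m ∈ Finset.Icc 1 n, c m := by
      by_cases hn : N ≤ n
      · have hcard : ((Finset.Icc (N + 1) n).card : ℝ) = (n : ℝ) - N := by
          have hc' : (Finset.Icc (N + 1) n).card = n - N := by rw [Nat.card_Icc]; omega
          rw [hc', Nat.cast_sub hn]
        calc ((n : ℝ) - N) * (cstar - ε / 2)
            = ∑ _m ∈ Finset.Icc (N + 1) n, (cstar - ε / 2) := by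
              rw [Finset.sum_const, nsmul_eq_mul, hcard]
          _ ≤ ∑ m ∈ Finset.Icc (N + 1) n, c m :=
              Finset.sum_le_sum fun m hm =>
                le_of_lt (hN m (by have := Finset.mem_Icc.1 hm; omega))
          _ ≤ ∑ m ∈ Finset.Icc 1 n, c m :=
              Finset.sum_le_sum_of_subset_of_nonneg
                (Finset.Icc_subset_Icc (by omega) le_rfl) (fun m _ _ => (hc01 m).1)
      · have hlt : ((n : ℝ) - N) < 0 := by
          push_neg at hn
          have : (n : ℝ) < N := by exact_mod_cast hn
          linarith
        have hpos : (0:ℝ) < cstar - ε / 2 := by linarith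
        have hrhs : (0:ℝ) ≤ ∑ m ∈ Finset.Icc 1 n, c m :=
          Finset.sum_nonneg fun m _ => (hc01 m).1
        nlinarith
    have hNnn : (0:ℝ) ≤ (N : ℝ) := Nat.cast_nonneg N
    have hp1 : (0:ℝ) ≤ (N : ℝ) * (1 - cstar) := mul_nonneg hNnn (by linarith)
    have hp2 : (0:ℝ) ≤ (N : ℝ) * ε := mul_nonneg hNnn hε.le
    nlinarith [hω, h1, h2, hHRsum, hsplitH, hsplitS, hsumc]
  -- bound for P (A n)
  set g : ℕ → ℝ := fun n => 768 / ε ^ 4 * (1 / (n : ℝ) ^ 2) with hgdef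
  have hgnn : ∀ n, 0 ≤ g n := by
    intro n
    rw [hgdef]
    positivity
  have hPA : ∀ n : ℕ, P (A n) ≤ ENNReal.ofReal (g n) := by
    intro n
    rcases Nat.eq_zero_or_pos n with hn | hn
    · subst hn
      have : A 0 = ∅ := by
        ext ω
        simp only [hAdef, Set.mem_setOf_eq, Set.mem_empty_iff_false, iff_false, not_lt, hSdef]
        norm_num
      simp [this]
    · have hnpos : (0:ℝ) < (n : ℝ) := by exact_mod_cast hn
      have ha : (0:ℝ) < (n : ℝ) * ε / 4 := by positivity
      have hb := markov4 P (hS4int n) ha (hmom n).2.2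
      have heq : (3 * (n:ℝ) ^ 2) / ((n : ℝ) * ε / 4) ^ 4 = g n := by
        rw [hgdef]
        field_simp
        ring
      rw [heq] at hb
      exact hb
  have hAsum : ∑' n : ℕ, P (A n) < ⊤ := by
    have hgsum : Summable g := by
      apply Summable.mul_left
      exact (Real.summable_one_div_nat_pow).2 (by norm_num)
    calc ∑' n : ℕ, P (A n) ≤ ∑' n : ℕ, ENNReal.ofReal (g n) := ENNReal.tsum_le_tsum hPA
      _ = ENNReal.ofReal (∑' n, g n) := (ENNReal.ofReal_tsum_of_nonneg hgnn hgsum).symm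
      _ < ⊤ := ENNReal.ofReal_lt_top
  -- bound for P (B n)
  set K : ℕ := ⌈(4 : ℝ) / ε⌉₊ with hKdef
  have hK : (4 : ℝ) / ε ≤ K := Nat.le_ceil _
  set Z : Ω → ℕ := fun ω => K * (σ ω + N) with hZdef
  have hZmeas : Measurable Z := by
    apply Measurable.const_mul
    exact hσmeas.add measurable_const
  have hBsub : ∀ n : ℕ, B n ⊆ {ω | n < Z ω} := by
    intro n ω hω
    simp only [hBdef, Set.mem_setOf_eq] at hω
    simp only [Set.mem_setOf_eq]
    have hσN : (0:ℝ) ≤ (σ ω : ℝ) + N := by positivity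
    have h1 : (n : ℝ) < ((σ ω : ℝ) + N) * (4 / ε) := by
      rw [show ((σ ω : ℝ) + N) * (4 / ε) = (((σ ω : ℝ) + N) * 4) / ε by ring,
        lt_div_iff₀ hε]
      nlinarith
    have h2 : ((σ ω : ℝ) + N) * (4 / ε) ≤ ((σ ω : ℝ) + N) * K :=
      mul_le_mul_of_nonneg_left hK hσN
    have h3 : (n : ℝ) < ((Z ω : ℕ) : ℝ) := by
      rw [hZdef]
      push_cast
      nlinarith
    exact_mod_cast h3
  have hσlint : ∫⁻ ω, ((σ ω : ℕ) : ENNReal) ∂P < ⊤ := by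
    have h2 := (hasFiniteIntegral_iff_ofReal
      (Filter.Eventually.of_forall fun ω => by positivity)).1 hσint.2
    simpa [ENNReal.ofReal_natCast] using h2
  have hZlint : ∫⁻ ω, ((Z ω : ℕ) : ENNReal) ∂P < ⊤ := by
    have hcalc : ∫⁻ ω, ((Z ω : ℕ) : ENNReal) ∂P
        = (K : ENNReal) * ((∫⁻ ω, ((σ ω : ℕ) : ENNReal) ∂P) + N) := by
      calc ∫⁻ ω, ((Z ω : ℕ) : ENNReal) ∂P
          = ∫⁻ ω, (K : ENNReal) * (((σ ω : ℕ) : ENNReal) + N) ∂P := by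
            apply lintegral_congr
            intro ω
            rw [hZdef]
            push_cast
            ring
        _ = (K : ENNReal) * ∫⁻ ω, (((σ ω : ℕ) : ENNReal) + N) ∂P := by
            apply lintegral_const_mul
            exact Measurable.add (f := fun ω => ((σ ω : ℕ) : ENNReal)) (measurable_from_top.comp hσmeas) measurable_const
        _ = (K : ENNReal) * ((∫⁻ ω, ((σ ω : ℕ) : ENNReal) ∂P) + N) := by
            rw [lintegral_add_right _ measurable_const, lintegral_const, measure_univ, mul_one]
    rw [hcalc]
    exact ENNReal.mul_lt_top (ENNReal.natCast_lt_top K)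
      (ENNReal.add_lt_top.2 ⟨hσlint, ENNReal.natCast_lt_top N⟩)
  have hBsum : ∑' n : ℕ, P (B n) < ⊤ := by
    calc ∑' n : ℕ, P (B n) ≤ ∑' n : ℕ, P {ω | n < Z ω} :=
          ENNReal.tsum_le_tsum fun n => measure_mono (hBsub n)
      _ = ∫⁻ ω, ((Z ω : ℕ) : ENNReal) ∂P := tail_sum P Z hZmeas
      _ < ⊤ := hZlint
  calc ∑' n : ℕ, P {ω | (∑ m ∈ Finset.Icc 1 n, R m ω) < (n : ℝ) * (cstar - ε)}
      ≤ ∑' n : ℕ, (P (A n) + P (B n)) :=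
        ENNReal.tsum_le_tsum fun n =>
          le_trans (measure_mono (hsub n)) (measure_union_le _ _)
    _ = (∑' n : ℕ, P (A n)) + ∑' n : ℕ, P (B n) := ENNReal.tsum_add
    _ < ⊤ := ENNReal.add_lt_top.2 ⟨hAsum, hBsum⟩
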